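/- arXiv:1407.2801 — 5 statements merged into one kernel-verified Lean document; each statement's English description precedes it below -/
import Mathlib

section
/- Let A be an n×n symmetric matrix and let π be a permutation of [n] such that the permuted matrix A_π = (A_{π(i)π(j)}) can be written as a conic (nonnegative) combination of cut matrices CUT(u,v). Then π is optimal for the 2-SUM problem on A; that is, for every permutation σ of [n], ∑_{i,j=1}^n A_{σ(i)σ(j)} (i−j)^2 ≥ ∑_{i,j=1}^n A_{π(i)π(j)} (i−j)^2. -/
/-- `A` is a Robinson similarity matrix: it is symmetric and its entries decrease
monotonically in rows and columns when moving away from the main diagonal, i.e.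
`A i k ≤ min (A i j) (A j k)` for all `i ≤ j ≤ k`. -/
def IsRobinsonSim {n : ℕ} (A : Matrix (Fin n) (Fin n) ℝ) : Prop :=
  (∀ i j, A i j = A j i) ∧
  ∀ i j k : Fin n, i ≤ j → j ≤ k → A i k ≤ min (A i j) (A j k)

/-- `B` is a Robinson dissimilarity matrix: it is symmetric and
`max (B i j) (B j k) ≤ B i k` for all `i ≤ j ≤ k`. -/
def IsRobinsonDissim {n : ℕ} (B : Matrix (Fin n) (Fin n) ℝ) : Prop :=
  (∀ i j, B i j = B j i) ∧
  ∀ i j k : Fin n, i ≤ j → j ≤ k → max (B i j) (B j k) ≤ B i k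

/-- `A` is a Toeplitz matrix: `A i j = A (i+1) (j+1)` whenever the indices make sense. -/
def IsToeplitz {n : ℕ} (A : Matrix (Fin n) (Fin n) ℝ) : Prop :=
  ∀ (i j : Fin n) (hi : i.val + 1 < n) (hj : j.val + 1 < n),
    A i j = A ⟨i.val + 1, hi⟩ ⟨j.val + 1, hj⟩

/-- The matrix `A_π` with entries `(A_π) i j = A (π i) (π j)`. -/
def permMat {n : ℕ} (A : Matrix (Fin n) (Fin n) ℝ) (π : Equiv.Perm (Fin n)) :
    Matrix (Fin n) (Fin n) ℝ :=
  Matrix.of fun i j => A (π i) (π j)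

/-- The trace inner product `⟨A,B⟩ = ∑_{i,j} A i j * B i j`. -/
def mInner {n : ℕ} (A B : Matrix (Fin n) (Fin n) ℝ) : ℝ :=
  ∑ i, ∑ j, A i j * B i j

/-- The 0/1 Toeplitz Robinson dissimilarity matrix `B^Δ_n`, with `(i,j)` entry `1`
iff `|i - j| ≥ n - Δ` (indices thought of as `1,…,n`, here `0`-based). -/
def BDelta (n Δ : ℕ) : Matrix (Fin n) (Fin n) ℝ :=
  Matrix.of fun i j => if (n : ℤ) - (Δ : ℤ) ≤ |(i.val : ℤ) - (j.val : ℤ)| then 1 else 0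

/-- The set `E^Δ_n` of (unordered, represented here with first coordinate smaller)
upper-triangular support positions of `B^Δ_n`: the pairs `(i,j)` with `i < j` and
`j - i ≥ n - Δ`, i.e. `i + (n - Δ) ≤ j`. -/
def EDelta (n Δ : ℕ) : Finset (Fin n × Fin n) :=
  Finset.univ.filter (fun p => p.1.val + (n - Δ) ≤ p.2.val)

/-- The cut matrix `CUT(u,v)` (with `1`-based indices `1 ≤ u ≤ v ≤ n`): its `(i,j)`
entry is `1` if `u ≤ i, j ≤ v` and `0` otherwise. -/
def CutMat (n u v : ℕ) : Matrix (Fin n) (Fin n) ℝ :=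
  Matrix.of fun i j =>
    if u ≤ i.val + 1 ∧ i.val + 1 ≤ v ∧ u ≤ j.val + 1 ∧ j.val + 1 ≤ v then 1 else 0

/-- `A` is a conic (nonnegative) combination of cut matrices `CUT(u,v)`, `1 ≤ u ≤ v ≤ n`. -/
def IsConicCombOfCuts {n : ℕ} (A : Matrix (Fin n) (Fin n) ℝ) : Prop :=
  ∃ (s : Finset (ℕ × ℕ)) (c : ℕ × ℕ → ℝ),
    (∀ p ∈ s, 0 ≤ c p ∧ 1 ≤ p.1 ∧ p.1 ≤ p.2 ∧ p.2 ≤ n) ∧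
    A = ∑ p ∈ s, c p • CutMat n p.1 p.2

/-- The 2-SUM objective `∑_{i,j} A (π i) (π j) (i - j)²`. -/
def twoSum {n : ℕ} (A : Matrix (Fin n) (Fin n) ℝ) (π : Equiv.Perm (Fin n)) : ℝ :=
  ∑ i, ∑ j, A (π i) (π j) * ((i.val : ℝ) - (j.val : ℝ)) ^ 2


private lemma gap_lemma' {k n : ℕ} (f : Fin k → Fin n) (hf : StrictMono f) :
    ∀ (d : ℕ) (a b : Fin k), b.val = a.val + d → (f a).val + d ≤ (f b).val := by
  intro d
  induction d with
  | zero =>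
    intro a b h
    have : a = b := Fin.ext (by omega)
    simp [this]
  | succ d ih =>
    intro a b h
    have hb' : a.val + d < k := by omega
    have h1 := ih a ⟨a.val + d, hb'⟩ rfl
    have h2 : (f ⟨a.val + d, hb'⟩).val < (f b).val := hf (by simp [Fin.lt_def]; omega)
    omega

private lemma sq_gap_aux' {k n : ℕ} (f : Fin k → Fin n) (hf : StrictMono f) (a b : Fin k)
    (hab : a ≤ b) :
    ((a.val : ℝ) - b.val) ^ 2 ≤ (((f a).val : ℝ) - ((f b).val : ℝ)) ^ 2 := by
  have hv : a.val ≤ b.val := hab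
  have h := gap_lemma' f hf (b.val - a.val) a b (by omega)
  have key : b.val + (f a).val ≤ (f b).val + a.val := by omega
  have h1 : (b.val : ℝ) - a.val ≤ ((f b).val : ℝ) - (f a).val := by
    rw [sub_le_sub_iff]
    exact_mod_cast key
  have h0 : (0:ℝ) ≤ (b.val : ℝ) - a.val := by
    rw [sub_nonneg]; exact_mod_cast hv
  have e1 : ((a.val : ℝ) - b.val) ^ 2 = ((b.val : ℝ) - a.val) ^ 2 := by ring
  have e2 : (((f a).val : ℝ) - (f b).val) ^ 2 = (((f b).val : ℝ) - (f a).val) ^ 2 := by ring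
  rw [e1, e2]
  exact pow_le_pow_left₀ h0 h1 2

private lemma sq_gap' {k n : ℕ} (f : Fin k → Fin n) (hf : StrictMono f) (a b : Fin k) :
    ((a.val : ℝ) - b.val) ^ 2 ≤ (((f a).val : ℝ) - ((f b).val : ℝ)) ^ 2 := by
  rcases le_total a b with hab | hab
  · exact sq_gap_aux' f hf a b hab
  · have := sq_gap_aux' f hf b a hab
    have e1 : ((a.val : ℝ) - b.val) ^ 2 = ((b.val : ℝ) - a.val) ^ 2 := by ring
    have e2 : (((f a).val : ℝ) - (f b).val) ^ 2 = (((f b).val : ℝ) - (f a).val) ^ 2 := by ring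
    rw [e1, e2]; exact this

private lemma forced' {k n : ℕ} (f : Fin k → Fin n) (hf : StrictMono f)
    (lo hi : ℕ) (hbound : ∀ c, lo ≤ (f c).val ∧ (f c).val ≤ hi)
    (hk : hi + 1 = lo + k) (a : Fin k) : (f a).val = lo + a.val := by
  have hk0 : 0 < k := a.pos
  have h1 := gap_lemma' f hf a.val ⟨0, hk0⟩ a (by simp)
  have h2 := gap_lemma' f hf (k - 1 - a.val) a ⟨k-1, by omega⟩ (by simp; omega)
  have h3 := hbound ⟨0, hk0⟩
  have h4 := hbound ⟨k-1, by omega⟩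
  have := a.isLt
  omega

private lemma sum_orderEmb' {n k : ℕ} (S : Finset (Fin n)) (h : S.card = k) (g : Fin n → ℝ) :
    ∑ i ∈ S, g i = ∑ a : Fin k, g (S.orderEmbOfFin h a) := by
  rw [← Finset.sum_coe_sort S g]
  have := Equiv.sum_comp (S.orderIsoOfFin h).toEquiv (fun x : {x // x ∈ S} => g x)
  rw [← this]
  simp [Finset.coe_orderIsoOfFin_apply]

private lemma cut_twoSum' {n : ℕ} (u v : ℕ) (τ : Equiv.Perm (Fin n)) :
    twoSum (CutMat n u v) τ =
      ∑ i ∈ Finset.univ.filter (fun i : Fin n => u ≤ (τ i).val + 1 ∧ (τ i).val + 1 ≤ v),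
        ∑ j ∈ Finset.univ.filter (fun i : Fin n => u ≤ (τ i).val + 1 ∧ (τ i).val + 1 ≤ v),
          ((i.val : ℝ) - (j.val : ℝ)) ^ 2 := by
  unfold twoSum CutMat
  simp only [Finset.sum_filter, Matrix.of_apply]
  refine Finset.sum_congr rfl fun i _ => ?_
  by_cases hi : u ≤ (τ i).val + 1 ∧ (τ i).val + 1 ≤ v
  · rw [if_pos hi]
    refine Finset.sum_congr rfl fun j _ => ?_
    by_cases hj : u ≤ (τ j).val + 1 ∧ (τ j).val + 1 ≤ v
    · rw [if_pos hj, if_pos ⟨hi.1, hi.2, hj.1, hj.2⟩, one_mul]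
    · rw [if_neg hj, if_neg (by tauto), zero_mul]
  · rw [if_neg hi]
    refine (Finset.sum_eq_zero fun j _ => ?_)
    rw [if_neg (by tauto), zero_mul]

private lemma card_Sperm' {n : ℕ} (P : Fin n → Prop) [DecidablePred P] (τ : Equiv.Perm (Fin n)) :
    (Finset.univ.filter (fun i => P (τ i))).card = (Finset.univ.filter P).card := by
  apply Finset.card_bij (fun i _ => τ i)
  · intro a ha; simp at ha ⊢; exact ha
  · intro a ha b hb hab; exact τ.injective hab
  · intro b hb; refine ⟨τ.symm b, ?_, by simp⟩; simp at hb ⊢; simpa using hb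

private lemma card_interval' {n : ℕ} (u v : ℕ) (hu : 1 ≤ u) (huv : u ≤ v) (hv : v ≤ n) :
    (Finset.univ.filter (fun i : Fin n => u ≤ i.val + 1 ∧ i.val + 1 ≤ v)).card
      = v + 1 - u := by
  have hE : (Finset.univ.filter (fun i : Fin n => u ≤ i.val + 1 ∧ i.val + 1 ≤ v))
      = Finset.Icc ⟨u-1, by omega⟩ ⟨v-1, by omega⟩ := by
    ext i
    simp [Finset.mem_Icc, Fin.le_def]
    omega
  rw [hE, Fin.card_Icc]
  simp
  omega

private lemma cut_opt' {n : ℕ} (u v : ℕ) (hu : 1 ≤ u) (huv : u ≤ v) (hv : v ≤ n)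
    (τ : Equiv.Perm (Fin n)) :
    twoSum (CutMat n u v) 1 ≤ twoSum (CutMat n u v) τ := by
  set k := v + 1 - u with hk
  set S1 : Finset (Fin n) :=
    Finset.univ.filter (fun i : Fin n => u ≤ i.val + 1 ∧ i.val + 1 ≤ v) with hS1
  set St : Finset (Fin n) :=
    Finset.univ.filter (fun i : Fin n => u ≤ (τ i).val + 1 ∧ (τ i).val + 1 ≤ v) with hSt
  have hcard1 : S1.card = k := card_interval' u v hu huv hv
  have hcardt : St.card = k := by
    rw [hSt, card_Sperm' (fun i : Fin n => u ≤ i.val + 1 ∧ i.val + 1 ≤ v) τ]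
    exact hcard1
  have h1 : twoSum (CutMat n u v) 1 = ∑ i ∈ S1, ∑ j ∈ S1, ((i.val : ℝ) - j.val) ^ 2 := by
    have := cut_twoSum' (n := n) u v 1
    simpa [hS1] using this
  have ht : twoSum (CutMat n u v) τ = ∑ i ∈ St, ∑ j ∈ St, ((i.val : ℝ) - j.val) ^ 2 :=
    cut_twoSum' u v τ
  have e1 : ∀ (S : Finset (Fin n)) (h : S.card = k),
      ∑ i ∈ S, ∑ j ∈ S, ((i.val : ℝ) - j.val) ^ 2
        = ∑ a : Fin k, ∑ b : Fin k,
            (((S.orderEmbOfFin h a).val : ℝ) - ((S.orderEmbOfFin h b).val : ℝ)) ^ 2 := by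
    intro S h
    rw [sum_orderEmb' S h]
    refine Finset.sum_congr rfl fun a _ => ?_
    exact sum_orderEmb' S h _
  rw [h1, ht, e1 S1 hcard1, e1 St hcardt]
  have hf1 : ∀ a : Fin k, ((S1.orderEmbOfFin hcard1) a).val = (u - 1) + a.val := by
    apply forced' _ (S1.orderEmbOfFin hcard1).strictMono (u-1) (v-1)
    · intro c
      have hm := S1.orderEmbOfFin_mem hcard1 c
      have hm2 := Finset.mem_filter.mp hm
      omega
    · omega
  refine Finset.sum_le_sum fun a _ => Finset.sum_le_sum fun b _ => ?_
  rw [hf1 a, hf1 b]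
  have hgoal : ((((u-1) + a.val : ℕ) : ℝ) - (((u-1) + b.val : ℕ) : ℝ)) ^ 2
      = ((a.val : ℝ) - b.val) ^ 2 := by push_cast; ring
  rw [hgoal]
  exact sq_gap' _ (St.orderEmbOfFin hcardt).strictMono a b

private lemma twoSum_sum' {n : ℕ} (s : Finset (ℕ × ℕ)) (c : ℕ × ℕ → ℝ)
    (τ : Equiv.Perm (Fin n)) :
    twoSum (∑ p ∈ s, c p • CutMat n p.1 p.2) τ
      = ∑ p ∈ s, c p * twoSum (CutMat n p.1 p.2) τ := by
  unfold twoSum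
  simp only [Matrix.sum_apply, Matrix.smul_apply, smul_eq_mul, Finset.sum_mul]
  have h1 : ∀ i : Fin n,
      (∑ j, ∑ p ∈ s, c p * CutMat n p.1 p.2 (τ i) (τ j) * ((i.val:ℝ) - (j.val:ℝ))^2)
        = ∑ p ∈ s, ∑ j, c p * CutMat n p.1 p.2 (τ i) (τ j) * ((i.val:ℝ) - (j.val:ℝ))^2 :=
    fun i => Finset.sum_comm
  simp only [h1]
  rw [Finset.sum_comm]
  refine Finset.sum_congr rfl fun p _ => ?_
  rw [Finset.mul_sum]
  refine Finset.sum_congr rfl fun i _ => ?_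
  rw [Finset.mul_sum]
  exact Finset.sum_congr rfl fun j _ => by ring

/-- if `A_π` is a conic combination of cut matrices, then `π` is optimal
for the 2-SUM problem on `A`. -/
theorem perm_optimal_twoSum_of_cuts {n : ℕ}
    (A : Matrix (Fin n) (Fin n) ℝ) (hAsym : ∀ i j, A i j = A j i)
    (π : Equiv.Perm (Fin n)) (hA : IsConicCombOfCuts (permMat A π))
    (σ : Equiv.Perm (Fin n)) :
    twoSum A σ ≥ twoSum A π := by
  obtain ⟨s, c, hc, hsum⟩ := hA
  have key : ∀ τ : Equiv.Perm (Fin n), twoSum A (π * τ) = twoSum (permMat A π) τ := by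
    intro τ
    unfold twoSum permMat
    simp [Equiv.Perm.mul_apply]
  have hσ : twoSum A σ = twoSum (permMat A π) (π⁻¹ * σ) := by
    have := key (π⁻¹ * σ)
    rwa [← mul_assoc, mul_inv_cancel, one_mul] at this
  have hπ : twoSum A π = twoSum (permMat A π) 1 := by
    have := key 1
    rwa [mul_one] at this
  rw [hσ, hπ, hsum, twoSum_sum', twoSum_sum']
  apply Finset.sum_le_sum
  intro p hp
  obtain ⟨h0, h1, h2, h3⟩ := hc p hp
  exact mul_le_mul_of_nonneg_left (cut_opt' p.1 p.2 h1 h2 h3 _) h0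
end

section
/- Let 1 ≤ u ≤ v ≤ n and let π be any permutation of [n]. Then ∑_{i=u}^{v} ∑_{j=u}^{v} (π(i)−π(j))^2 ≥ ∑_{i=u}^{v} ∑_{j=u}^{v} (i−j)^2. In other words, the identity permutation is optimal for the 2-SUM problem when the similarity matrix is the cut matrix CUT(u,v). -/
private lemma sm_add_le {m : ℕ} (g : Fin m → ℤ) (hg : StrictMono g) :
    ∀ d (k l : Fin m), k.val = l.val + d → (d : ℤ) ≤ g k - g l := by
  intro d
  induction d with
  | zero =>
    intro k l h
    have : k = l := Fin.ext (by omega)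
    simp [this]
  | succ d ih =>
    intro k l h
    have hk' : l.val + d < m := by omega
    have h1 := ih ⟨l.val + d, hk'⟩ l rfl
    have h2 : g ⟨l.val + d, hk'⟩ < g k := hg (by simp [Fin.lt_def]; omega)
    push_cast
    omega

private lemma sq_ge_of_strictMono {m : ℕ} (g : Fin m → ℤ) (hg : StrictMono g)
    (k l : Fin m) : ((k : ℤ) - (l : ℤ)) ^ 2 ≤ (g k - g l) ^ 2 := by
  have key : ∀ k l : Fin m, l ≤ k → ((k : ℤ) - (l : ℤ)) ^ 2 ≤ (g k - g l) ^ 2 := by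
    intro k l hlk
    obtain ⟨d, hd⟩ := Nat.exists_eq_add_of_le (Fin.le_def.mp hlk)
    have h1 := sm_add_le g hg d k l hd
    have h2 : (k : ℤ) - (l : ℤ) = d := by omega
    have h0 : (0 : ℤ) ≤ (k : ℤ) - (l : ℤ) := by omega
    exact pow_le_pow_left₀ h0 (by omega) 2
  rcases le_total l k with h | h
  · exact key k l h
  · have := key l k h
    calc ((k : ℤ) - (l : ℤ)) ^ 2 = ((l : ℤ) - (k : ℤ)) ^ 2 := by ring
    _ ≤ (g l - g k) ^ 2 := this
    _ = (g k - g l) ^ 2 := by ring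

/-- for `1 ≤ u ≤ v ≤ n` and any permutation `π` of `[n]` (here `1`-based
indices `i` correspond to `i.val + 1`),
`∑_{i,j = u}^{v} (π i - π j)² ≥ ∑_{i,j = u}^{v} (i - j)²`. -/
theorem identity_optimal_twoSum_cut {n u v : ℕ} (hu : 1 ≤ u) (huv : u ≤ v) (hv : v ≤ n)
    (π : Equiv.Perm (Fin n)) :
    ∑ i ∈ Finset.univ.filter (fun i : Fin n => u ≤ i.val + 1 ∧ i.val + 1 ≤ v),
      ∑ j ∈ Finset.univ.filter (fun j : Fin n => u ≤ j.val + 1 ∧ j.val + 1 ≤ v),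
        (((π i).val : ℤ) - ((π j).val : ℤ)) ^ 2
    ≥ ∑ i ∈ Finset.univ.filter (fun i : Fin n => u ≤ i.val + 1 ∧ i.val + 1 ≤ v),
        ∑ j ∈ Finset.univ.filter (fun j : Fin n => u ≤ j.val + 1 ∧ j.val + 1 ≤ v),
          ((i.val : ℤ) - (j.val : ℤ)) ^ 2 := by
  classical
  set S := Finset.univ.filter (fun i : Fin n => u ≤ i.val + 1 ∧ i.val + 1 ≤ v) with hS
  set m := v - (u - 1) with hm
  -- image of S under val
  have himg : S.image Fin.val = Finset.Ico (u - 1) v := by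
    ext x
    simp only [hS, Finset.mem_image, Finset.mem_filter, Finset.mem_univ, true_and,
      Finset.mem_Ico]
    constructor
    · rintro ⟨i, ⟨h1, h2⟩, rfl⟩; omega
    · rintro ⟨h1, h2⟩; exact ⟨⟨x, by omega⟩, ⟨by simp; omega, by simp; omega⟩, rfl⟩
  have hScard : S.card = m := by
    rw [← Finset.card_image_of_injective S Fin.val_injective, himg, Nat.card_Ico]
  -- RHS computation
  have hRHS : ∑ i ∈ S, ∑ j ∈ S, ((i.val : ℤ) - (j.val : ℤ)) ^ 2
      = ∑ k : Fin m, ∑ l : Fin m, ((k : ℤ) - (l : ℤ)) ^ 2 := by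
    have hval : ∀ G : ℕ → ℤ, ∑ i ∈ S, G i.val = ∑ x ∈ Finset.Ico (u - 1) v, G x := by
      intro G
      rw [← himg, Finset.sum_image (fun x _ y _ h => Fin.val_injective h)]
    rw [hval fun a => ∑ j ∈ S, ((a : ℤ) - (j.val : ℤ)) ^ 2]
    have : ∀ a : ℕ, ∑ j ∈ S, ((a : ℤ) - (j.val : ℤ)) ^ 2
        = ∑ y ∈ Finset.Ico (u - 1) v, ((a : ℤ) - (y : ℤ)) ^ 2 := fun a =>
      hval fun b => ((a : ℤ) - (b : ℤ)) ^ 2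
    simp only [this]
    rw [Finset.sum_Ico_eq_sum_range]
    have hfin : (∑ k : Fin m, ∑ l : Fin m, ((k : ℤ) - (l : ℤ)) ^ 2)
        = ∑ k ∈ Finset.range m, ∑ l ∈ Finset.range m, ((k : ℤ) - (l : ℤ)) ^ 2 := by
      rw [Fin.sum_univ_eq_sum_range (fun a : ℕ => ∑ l : Fin m, ((a : ℤ) - (l : ℤ)) ^ 2) m]
      exact Finset.sum_congr rfl fun k _ =>
        Fin.sum_univ_eq_sum_range (fun a : ℕ => ((k : ℤ) - (a : ℤ)) ^ 2) m
    rw [hfin]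
    refine Finset.sum_congr rfl fun k hk => ?_
    rw [Finset.sum_Ico_eq_sum_range]
    refine Finset.sum_congr rfl fun l hl => ?_
    have : ((u - 1 + k : ℕ) : ℤ) - ((u - 1 + l : ℕ) : ℤ) = (k : ℤ) - (l : ℤ) := by
      push_cast; ring
    rw [this]
  -- LHS computation
  set T := S.image π with hT
  have hTcard : T.card = m := by
    rw [hT, Finset.card_image_of_injective S π.injective, hScard]
  have hLHS : ∑ i ∈ S, ∑ j ∈ S, (((π i).val : ℤ) - ((π j).val : ℤ)) ^ 2
      = ∑ a ∈ T, ∑ b ∈ T, ((a.val : ℤ) - (b.val : ℤ)) ^ 2 := by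
    rw [hT, Finset.sum_image (fun x _ y _ h => π.injective h)]
    exact Finset.sum_congr rfl fun i _ =>
      (Finset.sum_image (s := S) (g := ⇑π)
        (f := fun b => (((π i).val : ℤ) - (b.val : ℤ)) ^ 2)
        (fun x _ y _ h => π.injective h)).symm
  set e := T.orderIsoOfFin hTcard with he
  set g : Fin m → ℤ := fun k => (((e k : Fin n)).val : ℤ) with hg
  have hgmono : StrictMono g := by
    intro a b hab
    have h1 : (e a : Fin n) < (e b : Fin n) := e.strictMono hab
    show (((e a : Fin n)).val : ℤ) < (((e b : Fin n)).val : ℤ)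
    exact_mod_cast Fin.lt_def.mp h1
  have hTsum : ∀ h : Fin n → ℤ, ∑ a ∈ T, h a = ∑ k : Fin m, h (e k) := by
    intro h
    rw [← Finset.sum_coe_sort T h]
    exact (Equiv.sum_comp e.toEquiv fun x => h x).symm
  have hLHS2 : ∑ a ∈ T, ∑ b ∈ T, ((a.val : ℤ) - (b.val : ℤ)) ^ 2
      = ∑ k : Fin m, ∑ l : Fin m, (g k - g l) ^ 2 := by
    rw [hTsum fun a => ∑ b ∈ T, ((a.val : ℤ) - (b.val : ℤ)) ^ 2]
    exact Finset.sum_congr rfl fun k _ =>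
      hTsum fun b => ((((e k : Fin n)).val : ℤ) - (b.val : ℤ)) ^ 2
  rw [ge_iff_le, hRHS, hLHS, hLHS2]
  exact Finset.sum_le_sum fun k _ => Finset.sum_le_sum fun l _ =>
    sq_ge_of_strictMono g hgmono k l
end

section
/- Let A be an n×n Robinson similarity matrix. Then the identity permutation is optimal for the 2-SUM problem on A; that is, for every permutation π of [n], ∑_{i,j=1}^n A_{π(i)π(j)} (i−j)^2 ≥ ∑_{i,j=1}^n A_{ij} (i−j)^2. -/
section AuxRobinson
open Finset

def pairsN (n : ℕ) : Finset (ℕ × ℕ) :=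
  (Finset.range n ×ˢ Finset.range n).filter (fun p => p.1 < p.2)

lemma mem_pairsN {n : ℕ} {p : ℕ × ℕ} : p ∈ pairsN n ↔ p.1 < p.2 ∧ p.2 < n := by
  simp only [pairsN, Finset.mem_filter, Finset.mem_product, Finset.mem_range]
  constructor
  · rintro ⟨⟨h1, h2⟩, h3⟩; exact ⟨h3, h2⟩
  · rintro ⟨h1, h2⟩; exact ⟨⟨by omega, h2⟩, h1⟩

lemma pairsN_succ (n : ℕ) :
    pairsN (n+1) = pairsN n ∪ (Finset.range n).map
      ⟨fun a => (a, n), fun a b h => by simpa using congrArg Prod.fst h⟩ := by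
  ext p
  simp only [mem_pairsN, Finset.mem_union, Finset.mem_map, Finset.mem_range,
    Function.Embedding.coeFn_mk]
  constructor
  · rintro ⟨h1, h2⟩
    rcases Nat.lt_succ_iff_lt_or_eq.mp h2 with h | h
    · exact Or.inl ⟨h1, h⟩
    · exact Or.inr ⟨p.1, by omega, by rw [← h]; rfl⟩
  · rintro (⟨h1, h2⟩ | ⟨a, ha, rfl⟩)
    · exact ⟨h1, by omega⟩
    · exact ⟨ha, by show n < n + 1; omega⟩

lemma card_filter_pairsN_succ (n : ℕ) (Q : ℕ × ℕ → Prop) [DecidablePred Q] :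
    ((pairsN (n+1)).filter Q).card =
      ((pairsN n).filter Q).card + ((Finset.range n).filter (fun a => Q (a, n))).card := by
  have hd : Disjoint ((pairsN n).filter Q)
      (((Finset.range n).map
        ⟨fun a => (a, n), fun a b h => by simpa using congrArg Prod.fst h⟩).filter Q) := by
    apply Finset.disjoint_filter_filter
    rw [Finset.disjoint_left]
    intro p hp hp2
    rw [mem_pairsN] at hp
    rcases Finset.mem_map.mp hp2 with ⟨a, _, rfl⟩
    exact absurd hp.2 (lt_irrefl n)
  rw [pairsN_succ, Finset.filter_union, Finset.card_union_of_disjoint hd, Finset.filter_map,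
    Finset.card_map]
  rfl

lemma shift_iff (w x y m : ℕ) (hx : x ≠ w) (hy : y ≠ w) :
    (m ≤ Nat.dist x y) ↔
      (m ≤ Nat.dist (if x < w then x else x - 1) (if y < w then y else y - 1) ∨
        ((x < w ∧ w < y ∨ y < w ∧ w < x) ∧ Nat.dist x y = m)) := by
  simp only [Nat.dist]
  split_ifs <;> omega

lemma shift_not (w x y m : ℕ) (hx : x ≠ w) (hy : y ≠ w) :
    ¬ (m ≤ Nat.dist (if x < w then x else x - 1) (if y < w then y else y - 1) ∧
        ((x < w ∧ w < y ∨ y < w ∧ w < x) ∧ Nat.dist x y = m)) := by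
  simp only [Nat.dist]
  split_ifs <;> omega

lemma claimC (m : ℕ) (hm : 0 < m) :
    ∀ (n : ℕ) (σ : ℕ → ℕ), (∀ a, a < n → σ a < n) →
      (∀ a, a < n → ∀ b, b < n → σ a = σ b → a = b) →
      ∀ (U : ℕ → ℕ → Bool),
      (∀ a a' b' b, a ≤ a' → a' < b' → b' ≤ b → b < n → U a b = true → U a' b' = true) →
      ((pairsN n).filter (fun p => U p.1 p.2 = true ∧ m ≤ Nat.dist p.1 p.2)).card ≤
      ((pairsN n).filter (fun p => U p.1 p.2 = true ∧ m ≤ Nat.dist (σ p.1) (σ p.2))).card := by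
  intro n
  induction n with
  | zero =>
    intro σ _ _ U _
    simp [pairsN]
  | succ n ih =>
    intro σ hmaps hinj U hdown
    set w := σ n with hw
    -- basic facts
    have hwlt : w < n + 1 := hmaps n (by omega)
    have hσne : ∀ a, a < n → σ a ≠ w := by
      intro a ha h
      have := hinj a (by omega) n (by omega) h
      omega
    -- the reduced permutation
    set σ' : ℕ → ℕ := fun a => if σ a < w then σ a else σ a - 1 with hσ'
    have hmaps' : ∀ a, a < n → σ' a < n := by
      intro a ha
      have h1 := hmaps a (by omega)
      have h2 := hσne a ha
      simp only [hσ']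
      split_ifs <;> omega
    have hinj' : ∀ a, a < n → ∀ b, b < n → σ' a = σ' b → a = b := by
      intro a ha b hb h
      apply hinj a (by omega) b (by omega)
      have h1 := hσne a ha
      have h2 := hσne b hb
      simp only [hσ'] at h
      split_ifs at h <;> omega
    -- split the counts over pairsN (n+1)
    rw [card_filter_pairsN_succ n (fun p => U p.1 p.2 = true ∧ m ≤ Nat.dist p.1 p.2),
      card_filter_pairsN_succ n (fun p => U p.1 p.2 = true ∧ m ≤ Nat.dist (σ p.1) (σ p.2))]
    simp only [← hw]
    -- inner split for σ : far pairs = (σ' far pairs) ∪ (crossing pairs at distance exactly m)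
    have hsplit : (pairsN n).filter (fun p => U p.1 p.2 = true ∧ m ≤ Nat.dist (σ p.1) (σ p.2)) =
        ((pairsN n).filter (fun p => U p.1 p.2 = true ∧ m ≤ Nat.dist (σ' p.1) (σ' p.2))) ∪
        ((pairsN n).filter (fun p => U p.1 p.2 = true ∧
          ((σ p.1 < w ∧ w < σ p.2 ∨ σ p.2 < w ∧ w < σ p.1) ∧ Nat.dist (σ p.1) (σ p.2) = m))) := by
      rw [← Finset.filter_or]
      apply Finset.filter_congr
      intro p hp
      rw [mem_pairsN] at hp
      have h1 := hσne p.1 (by omega)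
      have h2 := hσne p.2 (by omega)
      have := shift_iff w (σ p.1) (σ p.2) m h1 h2
      simp only [hσ']
      constructor
      · rintro ⟨hU, hd⟩
        rcases this.mp hd with h | h
        · exact Or.inl ⟨hU, h⟩
        · exact Or.inr ⟨hU, h⟩
      · rintro (⟨hU, hd⟩ | ⟨hU, hd⟩)
        · exact ⟨hU, this.mpr (Or.inl hd)⟩
        · exact ⟨hU, this.mpr (Or.inr hd)⟩
    have hdisj : Disjoint
        ((pairsN n).filter (fun p => U p.1 p.2 = true ∧ m ≤ Nat.dist (σ' p.1) (σ' p.2)))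
        ((pairsN n).filter (fun p => U p.1 p.2 = true ∧
          ((σ p.1 < w ∧ w < σ p.2 ∨ σ p.2 < w ∧ w < σ p.1) ∧ Nat.dist (σ p.1) (σ p.2) = m))) := by
      rw [Finset.disjoint_left]
      intro p hp1 hp2
      rw [Finset.mem_filter, mem_pairsN] at hp1 hp2
      have h1 := hσne p.1 (by omega)
      have h2 := hσne p.2 (by omega)
      have := shift_not w (σ p.1) (σ p.2) m h1 h2
      exact this ⟨hp1.2.2, hp2.2.2⟩
    rw [hsplit, Finset.card_union_of_disjoint hdisj]
    have hIH := ih σ' hmaps' hinj' U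
      (fun a a' b' b h1 h2 h3 h4 hU => hdown a a' b' b h1 h2 h3 (by omega) hU)
    set T := (Finset.range n).filter (fun a => U a n = true) with hT
    set Xset := (pairsN n).filter (fun p => U p.1 p.2 = true ∧
          ((σ p.1 < w ∧ w < σ p.2 ∨ σ p.2 < w ∧ w < σ p.1) ∧ Nat.dist (σ p.1) (σ p.2) = m))
      with hXset
    have hRid : (Finset.range n).filter (fun a => U a n = true ∧ m ≤ Nat.dist a n)
        = T.filter (fun a => m ≤ Nat.dist a n) := by
      rw [hT, Finset.filter_filter]
    have hRσ : (Finset.range n).filter (fun a => U a n = true ∧ m ≤ Nat.dist (σ a) w)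
        = T.filter (fun a => m ≤ Nat.dist (σ a) w) := by
      rw [hT, Finset.filter_filter]
    rw [hRid, hRσ]
    by_cases hTe : T = ∅
    · have h0 : T.filter (fun a => m ≤ Nat.dist a n) = ∅ := by rw [hTe, Finset.filter_empty]
      rw [h0]
      simp only [Finset.card_empty]
      omega
    have hTne : T.Nonempty := Finset.nonempty_iff_ne_empty.mpr hTe
    set a₀ := T.min' hTne with ha₀
    have ha₀T : a₀ ∈ T := Finset.min'_mem T hTne
    have ha₀n : a₀ < n := Finset.mem_range.mp (Finset.mem_filter.mp ha₀T).1
    have hU₀ : U a₀ n = true := (Finset.mem_filter.mp ha₀T).2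
    have hTmem : ∀ a, a ∈ T ↔ (a₀ ≤ a ∧ a < n) := by
      intro a
      constructor
      · intro ha
        exact ⟨Finset.min'_le T a ha, Finset.mem_range.mp (Finset.mem_filter.mp ha).1⟩
      · rintro ⟨h1, h2⟩
        exact Finset.mem_filter.mpr ⟨Finset.mem_range.mpr h2,
          hdown a₀ a n n h1 h2 le_rfl (by omega) hU₀⟩
    have hTIcc : T = Finset.Icc a₀ (n-1) := by
      ext a
      rw [hTmem, Finset.mem_Icc]
      omega
    have hTcard : T.card = n - a₀ := by
      rw [hTIcc, Nat.card_Icc]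
      omega
    have hfarnear : (T.filter (fun a => m ≤ Nat.dist (σ a) w)).card
        + (T.filter (fun a => ¬ m ≤ Nat.dist (σ a) w)).card = T.card :=
      Finset.card_filter_add_card_filter_not (p := fun a => m ≤ Nat.dist (σ a) w)
    set near := T.filter (fun a => ¬ m ≤ Nat.dist (σ a) w) with hnear
    have hnearfact : ∀ a ∈ near, a₀ ≤ a ∧ a < n ∧ σ a ≠ w ∧ Nat.dist (σ a) w < m := by
      intro a ha
      rw [hnear, Finset.mem_filter] at ha
      have h2 := (hTmem a).mp ha.1
      exact ⟨h2.1, h2.2, hσne a h2.2, by omega⟩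
    set chord : ℕ → ℕ := fun a => if σ a < w then w - σ a else m - (σ a - w) with hchord
    have hchordmem : ∀ a ∈ near, chord a ∈ Finset.Icc 1 (m-1) := by
      intro a ha
      obtain ⟨h1, h2, h3, h4⟩ := hnearfact a ha
      rw [Finset.mem_Icc]
      simp only [hchord]
      simp only [Nat.dist] at h4
      split_ifs <;> omega
    have hnearcard : near.card
        = ∑ i ∈ Finset.Icc 1 (m-1), (near.filter (fun a => chord a = i)).card :=
      Finset.card_eq_sum_card_fiberwise hchordmem
    have hfiberval : ∀ i ∈ Finset.Icc 1 (m-1), ∀ a ∈ near.filter (fun a => chord a = i),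
        (σ a < w ∧ σ a + i = w) ∨ (w < σ a ∧ σ a + i = w + m) := by
      intro i hi a ha
      rw [Finset.mem_filter] at ha
      obtain ⟨h1, h2, h3, h4⟩ := hnearfact a ha.1
      have h5 := ha.2
      rw [Finset.mem_Icc] at hi
      simp only [hchord] at h5
      simp only [Nat.dist] at h4
      split_ifs at h5 <;> [left; right] <;> omega
    have hfiber2 : ∀ i, (near.filter (fun a => chord a = i)).card ≤ 2 := by
      intro i
      have h2 : (near.filter (fun a => chord a = i)).card ≤ (Finset.univ : Finset Bool).card := by
        apply Finset.card_le_card_of_injOn (fun a => decide (σ a < w))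
        · intro a _
          exact Finset.mem_univ _
        · intro a ha b hb hab
          simp only [decide_eq_decide] at hab
          rw [Finset.mem_coe, Finset.mem_filter] at ha hb
          obtain ⟨ha1, ha2, ha3, ha4⟩ := hnearfact a ha.1
          obtain ⟨hb1, hb2, hb3, hb4⟩ := hnearfact b hb.1
          have hc : σ a = σ b := by
            have h5 := ha.2
            have h6 := hb.2
            simp only [hchord] at h5 h6
            simp only [Nat.dist] at ha4 hb4
            split_ifs at h5 h6 <;> omega
          exact hinj a (by omega) b (by omega) hc
      simpa using h2
    set Full := (Finset.Icc 1 (m-1)).filter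
      (fun i => 2 ≤ (near.filter (fun a => chord a = i)).card) with hFull
    have hnearbound : near.card ≤ (m-1) + Full.card := by
      rw [hnearcard, hFull]
      calc ∑ i ∈ Finset.Icc 1 (m-1), (near.filter (fun a => chord a = i)).card
          ≤ ∑ i ∈ Finset.Icc 1 (m-1),
              (1 + if 2 ≤ (near.filter (fun a => chord a = i)).card then 1 else 0) := by
            apply Finset.sum_le_sum
            intro i _
            have := hfiber2 i
            split_ifs <;> omega
        _ = (m-1) + ((Finset.Icc 1 (m-1)).filter
              (fun i => 2 ≤ (near.filter (fun a => chord a = i)).card)).card := by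
            rw [Finset.sum_add_distrib, Finset.sum_const, Nat.card_Icc, smul_eq_mul, mul_one]
            have h9 : m - 1 + 1 - 1 = m - 1 := by omega
            rw [h9, Finset.card_filter]
    have hFullX : Full.card ≤ Xset.card := by
      apply Finset.card_le_card_of_injOn
        (fun i => if h : (near.filter (fun a => chord a = i)).Nonempty
          then ((near.filter (fun a => chord a = i)).min' h,
                (near.filter (fun a => chord a = i)).max' h)
          else (0,0))
      · intro i hi
        rw [Finset.mem_coe, Finset.mem_filter] at hi
        obtain ⟨hiIcc, hicard⟩ := hi
        have hne : (near.filter (fun a => chord a = i)).Nonempty :=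
          Finset.card_pos.mp (by omega)
        simp only [dif_pos hne]
        have hmin := Finset.min'_mem _ hne
        have hmax := Finset.max'_mem _ hne
        have hlt : (near.filter (fun a => chord a = i)).min' hne
            < (near.filter (fun a => chord a = i)).max' hne :=
          Finset.min'_lt_max'_of_card _ (by omega)
        set a := (near.filter (fun a => chord a = i)).min' hne with haa
        set b := (near.filter (fun a => chord a = i)).max' hne with hbb
        have hva := hfiberval i hiIcc a hmin
        have hvb := hfiberval i hiIcc b hmax
        obtain ⟨ha1, ha2, ha3, ha4⟩ := hnearfact a (Finset.mem_filter.mp hmin).1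
        obtain ⟨hb1, hb2, hb3, hb4⟩ := hnearfact b (Finset.mem_filter.mp hmax).1
        have hab : σ a ≠ σ b := fun hc => by
          have := hinj a (by omega) b (by omega) hc
          omega
        rw [Finset.mem_Icc] at hiIcc
        rw [Finset.mem_coe, hXset, Finset.mem_filter, mem_pairsN]
        refine ⟨⟨hlt, hb2⟩, hdown a a b n le_rfl hlt (by omega) (by omega)
          ((Finset.mem_filter.mp ((hTmem a).mpr ⟨ha1, ha2⟩)).2), ?_⟩
        simp only [Nat.dist]
        rcases hva with ⟨h5, h6⟩ | ⟨h5, h6⟩ <;> rcases hvb with ⟨h7, h8⟩ | ⟨h7, h8⟩ <;>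
          exact ⟨by omega, by omega⟩
      · intro i hi j hj hij
        rw [Finset.mem_coe, hFull, Finset.mem_filter] at hi hj
        have hnei : (near.filter (fun a => chord a = i)).Nonempty :=
          Finset.card_pos.mp (by omega)
        have hnej : (near.filter (fun a => chord a = j)).Nonempty :=
          Finset.card_pos.mp (by omega)
        simp only [dif_pos hnei, dif_pos hnej, Prod.mk.injEq] at hij
        have h1 := Finset.min'_mem _ hnei
        have h2 := Finset.min'_mem _ hnej
        rw [hij.1] at h1
        have := (Finset.mem_filter.mp h1).2
        have := (Finset.mem_filter.mp h2).2
        omega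
    have hRidbound : (T.filter (fun a => m ≤ Nat.dist a n)).card + m + a₀ ≤ n + 1
        ∨ (T.filter (fun a => m ≤ Nat.dist a n)).card = 0 := by
      by_cases hmn : m + a₀ ≤ n
      · left
        have hsub : T.filter (fun a => m ≤ Nat.dist a n) ⊆ Finset.Icc a₀ (n - m) := by
          intro a ha
          rw [Finset.mem_filter] at ha
          have h2 := (hTmem a).mp ha.1
          have h3 := ha.2
          simp only [Nat.dist] at h3
          rw [Finset.mem_Icc]
          omega
        have := Finset.card_le_card hsub
        rw [Nat.card_Icc] at this
        omega
      · right
        rw [Finset.card_eq_zero, Finset.filter_eq_empty_iff]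
        intro a ha
        have h2 := (hTmem a).mp ha
        simp only [Nat.dist]
        omega
    omega

lemma sum_le_sum_of_dominance {α : Type*} [DecidableEq α] (φ : α → ℝ) :
    ∀ (k : ℕ) (S T : Finset α), S.card = k → T.card = k →
    (∀ t : ℝ, (T.filter (fun x => t ≤ φ x)).card ≤ (S.filter (fun x => t ≤ φ x)).card) →
    ∑ x ∈ T, φ x ≤ ∑ x ∈ S, φ x := by
  intro k
  induction k with
  | zero =>
    intro S T hS hT _
    rw [Finset.card_eq_zero.mp hS, Finset.card_eq_zero.mp hT]
  | succ k ih =>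
    intro S T hS hT h
    have hSne : S.Nonempty := Finset.card_pos.mp (by omega)
    have hTne : T.Nonempty := Finset.card_pos.mp (by omega)
    obtain ⟨a, haS, ha⟩ := Finset.exists_min_image S φ hSne
    obtain ⟨b, hbT, hb⟩ := Finset.exists_min_image T φ hTne
    have hba : φ b ≤ φ a := by
      by_contra hc
      push_neg at hc
      have h1 : T.filter (fun x => φ b ≤ φ x) = T := by
        apply Finset.filter_true_of_mem
        intro x hx; exact hb x hx
      have h2 : a ∉ S.filter (fun x => φ b ≤ φ x) := by
        simp only [Finset.mem_filter, not_and]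
        intro _
        linarith
      have h3 := h (φ b)
      rw [h1, hT] at h3
      have h4 : (S.filter (fun x => φ b ≤ φ x)).card < S.card :=
        Finset.card_lt_card (Finset.ssubset_iff_of_subset (Finset.filter_subset _ _) |>.mpr ⟨a, haS, h2⟩)
      omega
    have key : ∑ x ∈ T.erase b, φ x ≤ ∑ x ∈ S.erase a, φ x := by
      apply ih
      · rw [Finset.card_erase_of_mem haS, hS]; omega
      · rw [Finset.card_erase_of_mem hbT, hT]; omega
      · intro t
        by_cases htb : t ≤ φ b
        · have hta : t ≤ φ a := le_trans htb hba
          have e1 : (T.erase b).filter (fun x => t ≤ φ x) = (T.filter (fun x => t ≤ φ x)).erase b := by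
            rw [Finset.filter_erase]
          have e2 : (S.erase a).filter (fun x => t ≤ φ x) = (S.filter (fun x => t ≤ φ x)).erase a := by
            rw [Finset.filter_erase]
          rw [e1, e2, Finset.card_erase_of_mem (Finset.mem_filter.mpr ⟨hbT, htb⟩),
            Finset.card_erase_of_mem (Finset.mem_filter.mpr ⟨haS, hta⟩)]
          have := h t
          omega
        · have e1 : (T.erase b).filter (fun x => t ≤ φ x) = T.filter (fun x => t ≤ φ x) := by
            rw [Finset.filter_erase, Finset.erase_eq_of_notMem]
            simp only [Finset.mem_filter, not_and]
            intro _; exact htb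
          rw [e1]
          by_cases hta : t ≤ φ a
          · -- then all of S is in the filter, so S.filter has card k+1
            have hSf : S.filter (fun x => t ≤ φ x) = S :=
              Finset.filter_true_of_mem (fun x hx => le_trans hta (ha x hx))
            have e2 : (S.erase a).filter (fun x => t ≤ φ x) = S.erase a :=
              Finset.filter_true_of_mem (fun x hx => le_trans hta (ha x (Finset.mem_of_mem_erase hx)))
            rw [e2, Finset.card_erase_of_mem haS, hS]
            have hTf : (T.filter (fun x => t ≤ φ x)).card ≤ (T.erase b).card := by
              apply Finset.card_le_card
              intro x hx
              rcases Finset.mem_filter.mp hx with ⟨hxT, hxt⟩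
              apply Finset.mem_erase.mpr
              refine ⟨?_, hxT⟩
              rintro rfl; exact htb hxt
            rw [Finset.card_erase_of_mem hbT, hT] at hTf
            omega
          · have e2 : (S.erase a).filter (fun x => t ≤ φ x) = S.filter (fun x => t ≤ φ x) := by
              rw [Finset.filter_erase, Finset.erase_eq_of_notMem]
              simp only [Finset.mem_filter, not_and]
              intro _; exact hta
            rw [e2]; exact h t
    calc ∑ x ∈ T, φ x = φ b + ∑ x ∈ T.erase b, φ x := by
          rw [Finset.add_sum_erase _ _ hbT]
      _ ≤ φ a + ∑ x ∈ S.erase a, φ x := by linarith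
      _ = ∑ x ∈ S, φ x := by rw [Finset.add_sum_erase _ _ haS]

lemma keyL (n m : ℕ) (hm : 0 < m) (A : ℕ → ℕ → ℝ)
    (hRob : ∀ a a' b' b, a ≤ a' → a' < b' → b' ≤ b → b < n → A a b ≤ A a' b')
    (σ : ℕ → ℕ) (hmaps : ∀ a, a < n → σ a < n)
    (hinj : ∀ a, a < n → ∀ b, b < n → σ a = σ b → a = b)
    (hsurj : ∀ v, v < n → ∃ a, a < n ∧ σ a = v) :
    ∑ p ∈ (pairsN n).filter (fun p => m ≤ Nat.dist p.1 p.2), A p.1 p.2 ≤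
    ∑ p ∈ (pairsN n).filter (fun p => m ≤ Nat.dist (σ p.1) (σ p.2)), A p.1 p.2 := by
  set S := (pairsN n).filter (fun p => m ≤ Nat.dist (σ p.1) (σ p.2)) with hS
  set T := (pairsN n).filter (fun p => m ≤ Nat.dist p.1 p.2) with hT
  have hcard : S.card = T.card := by
    apply Finset.card_bij (fun p _ => (min (σ p.1) (σ p.2), max (σ p.1) (σ p.2)))
    · intro p hp
      rw [hS, Finset.mem_filter, mem_pairsN] at hp
      obtain ⟨⟨h1, h2⟩, h3⟩ := hp
      have h4 := hmaps p.1 (by omega)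
      have h5 := hmaps p.2 h2
      rw [hT, Finset.mem_filter, mem_pairsN]
      simp only [Nat.dist] at h3 ⊢
      omega
    · intro p hp q hq hpq
      rw [hS, Finset.mem_filter, mem_pairsN] at hp hq
      have h1 : min (σ p.1) (σ p.2) = min (σ q.1) (σ q.2) := congrArg Prod.fst hpq
      have h2 : max (σ p.1) (σ p.2) = max (σ q.1) (σ q.2) := congrArg Prod.snd hpq
      have h3 : σ p.1 = σ q.1 ∧ σ p.2 = σ q.2 ∨ σ p.1 = σ q.2 ∧ σ p.2 = σ q.1 := by omega
      rcases h3 with ⟨h4, h5⟩ | ⟨h4, h5⟩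
      · have e1 := hinj p.1 (by omega) q.1 (by omega) h4
        have e2 := hinj p.2 (by omega) q.2 (by omega) h5
        exact Prod.ext e1 e2
      · have e1 := hinj p.1 (by omega) q.2 (by omega) h4
        have e2 := hinj p.2 (by omega) q.1 (by omega) h5
        have : p.1 < p.2 := hp.1.1
        have : q.1 < q.2 := hq.1.1
        omega
    · intro q hq
      rw [hT, Finset.mem_filter, mem_pairsN] at hq
      obtain ⟨⟨h1, h2⟩, h3⟩ := hq
      obtain ⟨a, ha, hav⟩ := hsurj q.1 (by omega)
      obtain ⟨b, hb, hbv⟩ := hsurj q.2 h2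
      have hab : a ≠ b := by
        intro h
        rw [h, hbv] at hav
        omega
      refine ⟨(min a b, max a b), ?_, ?_⟩
      · rw [hS, Finset.mem_filter, mem_pairsN]
        rcases le_or_gt a b with h | h
        · rw [min_eq_left h, max_eq_right h, hav, hbv]
          simp only [Nat.dist] at h3 ⊢
          omega
        · rw [min_eq_right h.le, max_eq_left h.le, hav, hbv]
          simp only [Nat.dist] at h3 ⊢
          omega
      · rcases le_or_gt a b with h | h
        · have e1 : min a b = a := min_eq_left h
          have e2 : max a b = b := max_eq_right h
          simp only [e1, e2, hav, hbv]
          rw [min_eq_left (le_of_lt h1), max_eq_right (le_of_lt h1)]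
        · have e1 : min a b = b := min_eq_right h.le
          have e2 : max a b = a := max_eq_left h.le
          simp only [e1, e2, hav, hbv]
          rw [min_comm, max_comm, min_eq_left (le_of_lt h1), max_eq_right (le_of_lt h1)]
  apply sum_le_sum_of_dominance (fun p => A p.1 p.2) T.card S T hcard rfl
  intro t
  have hC := claimC m hm n σ hmaps hinj (fun a b => decide (t ≤ A a b))
    (by
      intro a a' b' b h1 h2 h3 h4 hU
      simp only [decide_eq_true_eq] at hU ⊢
      exact le_trans hU (hRob a a' b' b h1 h2 h3 h4))
  have e1 : T.filter (fun x => t ≤ A x.1 x.2)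
      = (pairsN n).filter (fun p => (decide (t ≤ A p.1 p.2) = true) ∧ m ≤ Nat.dist p.1 p.2) := by
    ext p
    simp only [hT, Finset.mem_filter, decide_eq_true_eq]
    tauto
  have e2 : S.filter (fun x => t ≤ A x.1 x.2)
      = (pairsN n).filter
          (fun p => (decide (t ≤ A p.1 p.2) = true) ∧ m ≤ Nat.dist (σ p.1) (σ p.2)) := by
    ext p
    simp only [hS, Finset.mem_filter, decide_eq_true_eq]
    tauto
  rw [← e1, ← e2] at hC
  exact hC

lemma sum_odd_nat (d : ℕ) : ∑ t ∈ Finset.Icc 1 d, (2*t - 1) = d^2 := by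
  induction d with
  | zero => simp
  | succ d ih =>
    rw [Finset.sum_Icc_succ_top (by omega : 1 ≤ d + 1), ih]
    have h : (d+1)^2 = d^2 + 2*d + 1 := by ring
    omega

lemma cast_sq_sum (d D : ℕ) (h : d ≤ D) :
    ((d:ℝ))^2 = ∑ t ∈ Finset.Icc 1 D, ((2*t - 1 : ℕ) : ℝ) * (if t ≤ d then (1:ℝ) else 0) := by
  have e1 : ∀ t ∈ Finset.Icc 1 D, ((2*t - 1 : ℕ) : ℝ) * (if t ≤ d then (1:ℝ) else 0)
      = if t ≤ d then ((2*t - 1 : ℕ) : ℝ) else 0 := by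
    intro t _; split_ifs <;> simp
  rw [Finset.sum_congr rfl e1, ← Finset.sum_filter]
  have e2 : (Finset.Icc 1 D).filter (fun t => t ≤ d) = Finset.Icc 1 d := by
    ext t
    simp only [Finset.mem_filter, Finset.mem_Icc]
    omega
  rw [e2, ← Nat.cast_sum, sum_odd_nat d]
  norm_cast

lemma double_sum_pairs (n : ℕ) (g : ℕ → ℕ → ℝ) (hsym : ∀ a b, g a b = g b a)
    (hdiag : ∀ a, g a a = 0) :
    ∑ i ∈ Finset.range n, ∑ j ∈ Finset.range n, g i j = 2 * ∑ p ∈ pairsN n, g p.1 p.2 := by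
  rw [← Finset.sum_product']
  rw [← Finset.sum_filter_add_sum_filter_not (Finset.range n ×ˢ Finset.range n)
    (fun p => p.1 < p.2) (fun p => g p.1 p.2)]
  rw [← Finset.sum_filter_add_sum_filter_not
    ((Finset.range n ×ˢ Finset.range n).filter (fun p => ¬ p.1 < p.2))
    (fun p => p.2 < p.1) (fun p => g p.1 p.2)]
  have e0 : (Finset.range n ×ˢ Finset.range n).filter (fun p => p.1 < p.2) = pairsN n := rfl
  have e2 : ∑ p ∈ ((Finset.range n ×ˢ Finset.range n).filter
        (fun p => ¬ p.1 < p.2)).filter (fun p => p.2 < p.1), g p.1 p.2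
      = ∑ p ∈ pairsN n, g p.1 p.2 := by
    apply Finset.sum_nbij' (i := Prod.swap) (j := Prod.swap)
    · intro p hp
      simp only [Finset.mem_filter, Finset.mem_product, Finset.mem_range] at hp
      simp only [mem_pairsN, Prod.fst_swap, Prod.snd_swap]
      omega
    · intro p hp
      rw [mem_pairsN] at hp
      simp only [Finset.mem_filter, Finset.mem_product, Finset.mem_range, Prod.fst_swap,
        Prod.snd_swap]
      omega
    · intro p _; exact Prod.swap_swap p
    · intro p _; exact Prod.swap_swap p
    · intro p _
      simp only [Prod.fst_swap, Prod.snd_swap]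
      exact hsym p.1 p.2
  have e3 : ∑ p ∈ ((Finset.range n ×ˢ Finset.range n).filter
        (fun p => ¬ p.1 < p.2)).filter (fun p => ¬ p.2 < p.1), g p.1 p.2 = 0 := by
    apply Finset.sum_eq_zero
    intro p hp
    simp only [Finset.mem_filter] at hp
    have : p.1 = p.2 := by omega
    rw [← this]
    exact hdiag p.1
  rw [e0, e2, e3]
  ring

/-- The contribution of distance threshold `t` to the 2-SUM objective. -/
noncomputable def Wsum {n : ℕ} (A : Matrix (Fin n) (Fin n) ℝ) (ρ : Equiv.Perm (Fin n))
    (t : ℕ) : ℝ :=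
  ∑ i : Fin n, ∑ j : Fin n,
    A (ρ i) (ρ j) * (if t ≤ Nat.dist i.val j.val then (1:ℝ) else 0)

lemma twoSum_decomp {n : ℕ} (A : Matrix (Fin n) (Fin n) ℝ) (ρ : Equiv.Perm (Fin n)) :
    twoSum A ρ = ∑ t ∈ Finset.Icc 1 n, ((2*t - 1 : ℕ) : ℝ) * Wsum A ρ t := by
  rw [twoSum]
  have e : ∀ i j : Fin n, A (ρ i) (ρ j) * ((i.val : ℝ) - (j.val : ℝ))^2
      = ∑ t ∈ Finset.Icc 1 n, ((2*t - 1 : ℕ) : ℝ) *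
          (A (ρ i) (ρ j) * (if t ≤ Nat.dist i.val j.val then (1:ℝ) else 0)) := by
    intro i j
    have hd : ((i.val : ℝ) - (j.val : ℝ))^2 = ((Nat.dist i.val j.val : ℕ) : ℝ)^2 := by
      rcases le_total i.val j.val with h | h
      · rw [Nat.dist_eq_sub_of_le h, Nat.cast_sub h]
        try ring
      · rw [Nat.dist_comm, Nat.dist_eq_sub_of_le h, Nat.cast_sub h]
        try ring
    have hdle : Nat.dist i.val j.val ≤ n := by
      have h1 := i.isLt
      have h2 := j.isLt
      simp only [Nat.dist]
      omega
    rw [hd, cast_sq_sum _ n hdle, Finset.mul_sum]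
    apply Finset.sum_congr rfl
    intro t _
    ring
  rw [Finset.sum_congr rfl (fun i _ => Finset.sum_congr rfl (fun j _ => e i j))]
  rw [Finset.sum_congr rfl (fun i (_ : i ∈ Finset.univ) => Finset.sum_comm), Finset.sum_comm]
  apply Finset.sum_congr rfl
  intro t _
  rw [Wsum, Finset.mul_sum]
  apply Finset.sum_congr rfl
  intro i _
  rw [Finset.mul_sum]


lemma Wsum_one_le {n : ℕ} (A : Matrix (Fin n) (Fin n) ℝ) (hA : IsRobinsonSim A)
    (π : Equiv.Perm (Fin n)) (t : ℕ) (ht : 1 ≤ t) :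
    Wsum A (1 : Equiv.Perm (Fin n)) t ≤ Wsum A π t := by
  obtain ⟨hsymA, hRobA⟩ := hA
  classical
  set Ah : ℕ → ℕ → ℝ := fun a b => if h : a < n ∧ b < n then A ⟨a, h.1⟩ ⟨b, h.2⟩ else 0 with hAh
  set σh : ℕ → ℕ := fun a => if h : a < n then ((π.symm ⟨a, h⟩ : Fin n) : ℕ) else 0 with hσh
  have hAhval : ∀ u v : Fin n, A u v = Ah u.val v.val := by
    intro u v
    simp only [hAh]
    rw [dif_pos (⟨u.isLt, v.isLt⟩ : u.val < n ∧ v.val < n)]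
  have hσhval : ∀ u : Fin n, σh u.val = (π.symm u).val := by
    intro u
    simp only [hσh]
    rw [dif_pos u.isLt]
  have hAhsym : ∀ a b, Ah a b = Ah b a := by
    intro a b
    simp only [hAh]
    split_ifs with h1 h2 h2
    · exact hsymA _ _
    · exact absurd ⟨h1.2, h1.1⟩ h2
    · exact absurd ⟨h2.2, h2.1⟩ h1
    · rfl
  have hRobAh : ∀ a a' b' b, a ≤ a' → a' < b' → b' ≤ b → b < n → Ah a b ≤ Ah a' b' := by
    intro a a' b' b h1 h2 h3 h4
    have ha : a < n := by omega
    have ha' : a' < n := by omega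
    have hb' : b' < n := by omega
    simp only [hAh]
    rw [dif_pos (⟨ha, h4⟩ : a < n ∧ b < n), dif_pos (⟨ha', hb'⟩ : a' < n ∧ b' < n)]
    have step1 : A ⟨a, ha⟩ ⟨b, h4⟩ ≤ A ⟨a', ha'⟩ ⟨b, h4⟩ := by
      have := hRobA ⟨a, ha⟩ ⟨a', ha'⟩ ⟨b, h4⟩ (by simp only [Fin.mk_le_mk]; omega)
        (by simp only [Fin.mk_le_mk]; omega)
      exact le_trans this (min_le_right _ _)
    have step2 : A ⟨a', ha'⟩ ⟨b, h4⟩ ≤ A ⟨a', ha'⟩ ⟨b', hb'⟩ := by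
      have := hRobA ⟨a', ha'⟩ ⟨b', hb'⟩ ⟨b, h4⟩ (by simp only [Fin.mk_le_mk]; omega)
        (by simp only [Fin.mk_le_mk]; omega)
      exact le_trans this (min_le_left _ _)
    exact le_trans step1 step2
  have hmaps : ∀ a, a < n → σh a < n := by
    intro a ha
    simp only [hσh]
    rw [dif_pos ha]
    exact (π.symm ⟨a, ha⟩).isLt
  have hinj : ∀ a, a < n → ∀ b, b < n → σh a = σh b → a = b := by
    intro a ha b hb h
    simp only [hσh] at h
    rw [dif_pos ha, dif_pos hb] at h
    have h2 : π.symm ⟨a, ha⟩ = π.symm ⟨b, hb⟩ := Fin.val_injective h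
    have h3 := π.symm.injective h2
    exact congrArg Fin.val h3
  have hsurj : ∀ v, v < n → ∃ a, a < n ∧ σh a = v := by
    intro v hv
    refine ⟨(π ⟨v, hv⟩).val, (π ⟨v, hv⟩).isLt, ?_⟩
    rw [hσhval (π ⟨v, hv⟩), Equiv.symm_apply_apply]
  -- rewrite Wsum A π t by reindexing with π
  have h1 : Wsum A π t = ∑ u : Fin n, ∑ v : Fin n,
      A u v * (if t ≤ Nat.dist (σh u.val) (σh v.val) then (1:ℝ) else 0) := by
    rw [Wsum]
    rw [← Equiv.sum_comp π (fun u : Fin n => ∑ v : Fin n,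
      A u v * (if t ≤ Nat.dist (σh u.val) (σh v.val) then (1:ℝ) else 0))]
    apply Finset.sum_congr rfl
    intro i _
    rw [← Equiv.sum_comp π (fun v : Fin n =>
      A (π i) v * (if t ≤ Nat.dist (σh ((π i).val)) (σh v.val) then (1:ℝ) else 0))]
    apply Finset.sum_congr rfl
    intro j _
    rw [hσhval (π i), hσhval (π j), Equiv.symm_apply_apply, Equiv.symm_apply_apply]
  have h2 : Wsum A (1 : Equiv.Perm (Fin n)) t = ∑ u : Fin n, ∑ v : Fin n,
      A u v * (if t ≤ Nat.dist u.val v.val then (1:ℝ) else 0) := by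
    rw [Wsum]
    simp only [Equiv.Perm.one_apply]
  -- convert to sums over pairsN
  have h3 : ∀ (τ : ℕ → ℕ), (∀ a, a < n → τ a = a ∨ True) →
      ∑ u : Fin n, ∑ v : Fin n, A u v * (if t ≤ Nat.dist (τ u.val) (τ v.val) then (1:ℝ) else 0)
      = 2 * ∑ p ∈ (pairsN n).filter (fun p => t ≤ Nat.dist (τ p.1) (τ p.2)), Ah p.1 p.2 := by
    intro τ _
    have step1 : ∑ u : Fin n, ∑ v : Fin n,
        A u v * (if t ≤ Nat.dist (τ u.val) (τ v.val) then (1:ℝ) else 0)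
        = ∑ a ∈ Finset.range n, ∑ b ∈ Finset.range n,
            Ah a b * (if t ≤ Nat.dist (τ a) (τ b) then (1:ℝ) else 0) := by
      rw [← Fin.sum_univ_eq_sum_range (fun a => ∑ b ∈ Finset.range n,
        Ah a b * (if t ≤ Nat.dist (τ a) (τ b) then (1:ℝ) else 0)) n]
      apply Finset.sum_congr rfl
      intro u _
      rw [← Fin.sum_univ_eq_sum_range (fun b =>
        Ah u.val b * (if t ≤ Nat.dist (τ u.val) (τ b) then (1:ℝ) else 0)) n]
      apply Finset.sum_congr rfl
      intro v _
      rw [hAhval u v]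
    rw [step1, double_sum_pairs n _ ?_ ?_]
    · congr 1
      rw [Finset.sum_filter]
      apply Finset.sum_congr rfl
      intro p _
      rw [mul_ite, mul_one, mul_zero]
    · intro a b
      rw [hAhsym a b, Nat.dist_comm]
    · intro a
      have : Nat.dist (τ a) (τ a) = 0 := Nat.dist_self _
      rw [this, if_neg (by omega), mul_zero]
  rw [h1, h2, h3 σh (fun _ _ => Or.inr trivial), h3 (fun a => a) (fun _ _ => Or.inr trivial)]
  have := keyL n t ht Ah hRobAh σh hmaps hinj hsurj
  linarith

end AuxRobinson

/-- if `A` is a Robinson similarity matrix, then the identity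
permutation is optimal for the 2-SUM problem on `A`. -/
theorem identity_optimal_twoSum_robinson {n : ℕ}
    (A : Matrix (Fin n) (Fin n) ℝ) (hA : IsRobinsonSim A) (π : Equiv.Perm (Fin n)) :
    twoSum A π ≥ twoSum A (1 : Equiv.Perm (Fin n)) := by
  rw [ge_iff_le, twoSum_decomp A π, twoSum_decomp A (1 : Equiv.Perm (Fin n))]
  apply Finset.sum_le_sum
  intro t ht
  rw [Finset.mem_Icc] at ht
  have hW := Wsum_one_le A hA π t ht.1
  have hc : (0:ℝ) ≤ ((2*t - 1 : ℕ) : ℝ) := Nat.cast_nonneg _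
  exact mul_le_mul_of_nonneg_left hW hc
end

section
/- Let n ≥ 2, let Δ be an integer with 1 ≤ Δ ≤ n−1, let k ∈ [n], and let F ⊆ E^Δ_n with complement R = E^Δ_n \ F. Assume: (C1) |F| = Δ; (C4) no pair in R contains the element k; and (C5) no diagonal pair {i, n−Δ+i} with k+1−n+Δ ≤ i ≤ k−1 and 1 ≤ i ≤ Δ belongs to R. Let τ be the cyclic permutation of [n] defined by τ(i) = i for i < k, τ(i) = i+1 for k ≤ i ≤ n−1, and τ(n) = k. Then R = τ(E^{Δ−1}_{n−1}) := {{τ(i), τ(j)} : {i,j} ∈ E^{Δ−1}_{n−1}}. -/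
/-- The set `E^Δ_n = {{i, n - Δ + j} : 1 ≤ i ≤ j ≤ Δ}` of unordered pairs of elements
of `[n] = {1,…,n}`. Since `i ≤ Δ < n - Δ + j` for every such pair, each unordered pair
is represented canonically by the ordered pair whose first coordinate is the smaller
element. -/
def EDeltaPairs (n Δ : ℕ) : Finset (ℕ × ℕ) :=
  ((Finset.Icc 1 Δ ×ˢ Finset.Icc 1 Δ).filter (fun p => p.1 ≤ p.2)).image
    (fun p => (p.1, n - Δ + p.2))

lemma mem_EDeltaPairs {n Δ : ℕ} {p : ℕ × ℕ} :
    p ∈ EDeltaPairs n Δ ↔ ∃ i j, 1 ≤ i ∧ i ≤ j ∧ j ≤ Δ ∧ p = (i, n - Δ + j) := by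
  simp only [EDeltaPairs, Finset.mem_image, Finset.mem_filter, Finset.mem_product,
    Finset.mem_Icc, Prod.exists]
  constructor
  · rintro ⟨a, b, ⟨⟨⟨h1, h2⟩, h3, h4⟩, h5⟩, h6⟩
    exact ⟨a, b, h1, h5, h4, h6.symm⟩
  · rintro ⟨i, j, h1, h2, h3, rfl⟩
    exact ⟨i, j, ⟨⟨⟨h1, le_trans h2 h3⟩, le_trans h1 h2, h3⟩, h2⟩, rfl⟩


/-- Claim 2: let `2 ≤ n`, `1 ≤ Δ ≤ n - 1`, `k ∈ [n]`, `F ⊆ E^Δ_n` and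
`R = E^Δ_n \ F`. Assume (C1) `|F| = Δ`; (C4) no pair in `R` contains `k`; (C5) no
diagonal pair `{i, n - Δ + i}` with `k + 1 - n + Δ ≤ i ≤ k - 1` (and `1 ≤ i ≤ Δ`) lies
in `R`. Let `τ = (k, k+1, …, n)` be the cycle with `τ i = i` for `i < k`,
`τ i = i + 1` for `k ≤ i ≤ n - 1` and `τ n = k`. Then `R = τ(E^{Δ-1}_{n-1})`
(unordered pairs; the canonical representative of `{τ i, τ j}` is
`(min (τ i) (τ j), max (τ i) (τ j))`). -/
theorem claim2_R_eq_tau_image {n Δ k : ℕ} (hn : 2 ≤ n)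
    (hΔ1 : 1 ≤ Δ) (hΔ2 : Δ ≤ n - 1) (hk1 : 1 ≤ k) (hk2 : k ≤ n)
    (F R : Finset (ℕ × ℕ)) (hF : F ⊆ EDeltaPairs n Δ) (hR : R = EDeltaPairs n Δ \ F)
    (hC1 : F.card = Δ)
    (hC4 : ∀ p ∈ R, p.1 ≠ k ∧ p.2 ≠ k)
    (hC5 : ∀ i, 1 ≤ i → i ≤ Δ → k + 1 + Δ ≤ n + i → i + 1 ≤ k →
      (i, n - Δ + i) ∉ R)
    (τ : ℕ → ℕ)
    (hτ1 : ∀ i, i < k → τ i = i)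
    (hτ2 : ∀ i, k ≤ i → i ≤ n - 1 → τ i = i + 1)
    (hτ3 : τ n = k) :
    R = (EDeltaPairs (n - 1) (Δ - 1)).image
      (fun p => (min (τ p.1) (τ p.2), max (τ p.1) (τ p.2))) := by
  have hRE : R ⊆ EDeltaPairs n Δ := by
    rw [hR]; exact Finset.sdiff_subset
  -- R ⊆ image
  have hsub : R ⊆ (EDeltaPairs (n - 1) (Δ - 1)).image
      (fun p => (min (τ p.1) (τ p.2), max (τ p.1) (τ p.2))) := by
    intro p hp
    obtain ⟨i, j, hi1, hij, hjΔ, rfl⟩ := mem_EDeltaPairs.mp (hRE hp)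
    obtain ⟨hne1, hne2⟩ := hC4 _ hp
    simp only at hne1 hne2
    rw [Finset.mem_image]
    rcases lt_or_gt_of_ne hne1 with hik | hik
    · rcases lt_or_gt_of_ne hne2 with hmk | hmk
      · -- i < k, n-Δ+j < k : preimage pair (i, j)
        refine ⟨(i, n - Δ + j), mem_EDeltaPairs.mpr ⟨i, j, hi1, hij, by omega, ?_⟩, ?_⟩
        · rw [Prod.mk.injEq]; exact ⟨rfl, by omega⟩
        · rw [hτ1 i hik, hτ1 _ hmk, Prod.mk.injEq]; omega
      · -- i < k < n-Δ+j : preimage pair (i, j-1)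
        have hij' : i < j := by
          rcases eq_or_lt_of_le hij with rfl | h
          · exact absurd hp (hC5 i hi1 hjΔ (by omega) (by omega))
          · exact h
        refine ⟨(i, n - Δ + (j - 1)),
          mem_EDeltaPairs.mpr ⟨i, j - 1, hi1, by omega, by omega, ?_⟩, ?_⟩
        · rw [Prod.mk.injEq]; exact ⟨rfl, by omega⟩
        · have ht : τ (n - Δ + (j - 1)) = n - Δ + j := by
            rw [hτ2 _ (by omega) (by omega)]; omega
          rw [hτ1 i hik, ht, Prod.mk.injEq]; omega
    · rcases lt_or_gt_of_ne hne2 with hmk | hmk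
      · exfalso; omega
      · -- k < i, k < n-Δ+j : preimage pair (i-1, j-1)
        refine ⟨(i - 1, n - Δ + (j - 1)),
          mem_EDeltaPairs.mpr ⟨i - 1, j - 1, by omega, by omega, by omega, ?_⟩, ?_⟩
        · rw [Prod.mk.injEq]; exact ⟨rfl, by omega⟩
        · have ht : τ (n - Δ + (j - 1)) = n - Δ + j := by
            rw [hτ2 _ (by omega) (by omega)]; omega
          have ht2 : τ (i - 1) = i := by
            rw [hτ2 _ (by omega) (by omega)]; omega
          rw [ht2, ht, Prod.mk.injEq]; omega
  -- cardinality comparison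
  have hE'sub : EDeltaPairs (n - 1) (Δ - 1) ⊆ EDeltaPairs n Δ := by
    intro p hp
    obtain ⟨a, b, h1, h2, h3, rfl⟩ := mem_EDeltaPairs.mp hp
    exact mem_EDeltaPairs.mpr ⟨a, b, h1, h2, by omega,
      by rw [Prod.mk.injEq]; exact ⟨rfl, by omega⟩⟩
  set D : Finset (ℕ × ℕ) := (Finset.Icc 1 Δ).image (fun i => (i, n)) with hD
  have hDsub : D ⊆ EDeltaPairs n Δ := by
    intro p hp
    simp only [hD, Finset.mem_image, Finset.mem_Icc] at hp
    obtain ⟨i, ⟨h1, h2⟩, rfl⟩ := hp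
    exact mem_EDeltaPairs.mpr ⟨i, Δ, h1, h2, le_rfl,
      by rw [Prod.mk.injEq]; exact ⟨rfl, by omega⟩⟩
  have hdisj : Disjoint (EDeltaPairs (n - 1) (Δ - 1)) D := by
    rw [Finset.disjoint_left]
    intro p hp hpD
    obtain ⟨a, b, h1, h2, h3, rfl⟩ := mem_EDeltaPairs.mp hp
    simp only [hD, Finset.mem_image, Finset.mem_Icc, Prod.mk.injEq] at hpD
    obtain ⟨i, _, _, h5⟩ := hpD
    omega
  have hcardD : D.card = Δ := by
    rw [hD, Finset.card_image_of_injective _ (fun a b h => (Prod.ext_iff.mp h).1),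
      Nat.card_Icc]
    omega
  have hcards : (EDeltaPairs (n - 1) (Δ - 1)).card + Δ ≤ (EDeltaPairs n Δ).card := by
    calc (EDeltaPairs (n - 1) (Δ - 1)).card + Δ
        = ((EDeltaPairs (n - 1) (Δ - 1)) ∪ D).card := by
          rw [Finset.card_union_of_disjoint hdisj, hcardD]
      _ ≤ _ := Finset.card_le_card (Finset.union_subset hE'sub hDsub)
  have hcardR : R.card = (EDeltaPairs n Δ).card - Δ := by
    rw [hR, Finset.card_sdiff_of_subset hF, hC1]
  have himg : ((EDeltaPairs (n - 1) (Δ - 1)).image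
      (fun p => (min (τ p.1) (τ p.2), max (τ p.1) (τ p.2)))).card
      ≤ (EDeltaPairs (n - 1) (Δ - 1)).card := Finset.card_image_le
  exact Finset.eq_of_subset_of_card_le hsub (by omega)
end

section
/- Let n ≥ 2, let Δ be an integer with 1 ≤ Δ ≤ n−1, let π be a permutation of [n], and let k = π^{-1}(n). Then there exists a set F ⊆ E^Δ_n such that: (C1) |F| = Δ; (C2) the values min{π(i), π(j)} over the pairs {i,j} ∈ F are pairwise distinct; (C4) no pair in R = E^Δ_n \ F contains the element k; and (C5) no diagonal pair {i, n−Δ+i} with k+1−n+Δ ≤ i ≤ k−1 and 1 ≤ i ≤ Δ belongs to R. -/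
/-- let `2 ≤ n`, `1 ≤ Δ ≤ n - 1`, let `π` be a permutation of `[n]`
(modelled as a permutation of `ℕ` fixing every point outside `{1,…,n}`) and let
`k = π⁻¹ n`. Then there is a set `F ⊆ E^Δ_n` with: (C1) `|F| = Δ`; (C2) the values
`min (π i) (π j)` over the pairs `{i,j} ∈ F` are pairwise distinct; (C4) no pair in
`R = E^Δ_n \ F` contains `k`; (C5) no diagonal pair `{i, n - Δ + i}` with
`k + 1 - n + Δ ≤ i ≤ k - 1` (and `1 ≤ i ≤ Δ`) lies in `R`. -/
theorem exists_F_satisfying_C1_C2_C4_C5 {n Δ : ℕ} (hn : 2 ≤ n)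
    (hΔ1 : 1 ≤ Δ) (hΔ2 : Δ ≤ n - 1)
    (π : Equiv.Perm ℕ) (hπ : ∀ i, i ∉ Finset.Icc 1 n → π i = i) :
    ∃ F : Finset (ℕ × ℕ), F ⊆ EDeltaPairs n Δ ∧
      F.card = Δ ∧
      Set.InjOn (fun p : ℕ × ℕ => min (π p.1) (π p.2)) ↑F ∧
      (∀ p ∈ EDeltaPairs n Δ \ F, p.1 ≠ π.symm n ∧ p.2 ≠ π.symm n) ∧
      (∀ i, 1 ≤ i → i ≤ Δ → π.symm n + 1 + Δ ≤ n + i → i + 1 ≤ π.symm n →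
        (i, n - Δ + i) ∉ EDeltaPairs n Δ \ F) := by
  -- π maps [1,n] into itself
  have hπmem : ∀ b, b ∈ Finset.Icc 1 n → π b ∈ Finset.Icc 1 n := by
    intro b hb
    by_contra h
    have h1 : π (π b) = π b := hπ _ h
    have h2 : π b = b := π.injective h1
    rw [h2] at h
    exact h hb
  set k := π.symm n with hkdef
  have hπk : π k = n := π.apply_symm_apply n
  have hkmem : k ∈ Finset.Icc 1 n := by
    by_contra h
    have h1 : π k = k := hπ _ h
    rw [hπk] at h1
    rw [← h1] at h
    simp [Finset.mem_Icc] at h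
    omega
  rw [Finset.mem_Icc] at hkmem
  obtain ⟨hk1, hk2⟩ := hkmem
  set m := n - Δ with hmdef
  have hm1 : 1 ≤ m := by omega
  have hmn : m + Δ = n := by omega
  set f : ℕ → ℕ × ℕ := fun i => (min i k, m + max i (k - m)) with hfdef
  -- key fact: min of π-values over a pair f i is π of a vertex ≠ k of the pair
  have key : ∀ i, 1 ≤ i → i ≤ Δ →
      (min (π (f i).1) (π (f i).2) = π (f i).1 ∧ (f i).1 ≠ k) ∨
      (min (π (f i).1) (π (f i).2) = π (f i).2 ∧ (f i).2 ≠ k) := by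
    intro i hi1 hi2
    have ha : (f i).1 = min i k := rfl
    have hb : (f i).2 = m + max i (k - m) := rfl
    have hab : (f i).1 < (f i).2 := by rw [ha, hb]; omega
    have hamem : (f i).1 ∈ Finset.Icc 1 n := by rw [ha, Finset.mem_Icc]; omega
    have hbmem : (f i).2 ∈ Finset.Icc 1 n := by rw [hb, Finset.mem_Icc]; omega
    by_cases hak : (f i).1 = k
    · -- π (f i).1 = n, so min is the other value
      right
      have hbk : (f i).2 ≠ k := by rw [ha] at hak; rw [hb]; omega
      have hπb : π (f i).2 ≠ n := by
        intro hc
        exact hbk (π.injective (by rw [hc, hπk]))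
      have hπble : π (f i).2 ≤ n := (Finset.mem_Icc.mp (hπmem _ hbmem)).2
      constructor
      · rw [hak, hπk]; omega
      · exact hbk
    · by_cases hbk : (f i).2 = k
      · left
        have hπa : π (f i).1 ≠ n := by
          intro hc
          exact hak (π.injective (by rw [hc, hπk]))
        have hπale : π (f i).1 ≤ n := (Finset.mem_Icc.mp (hπmem _ hamem)).2
        constructor
        · rw [hbk, hπk]; omega
        · exact hak
      · rcases le_total (π (f i).1) (π (f i).2) with h | h
        · exact Or.inl ⟨min_eq_left h, hak⟩
        · exact Or.inr ⟨min_eq_right h, hbk⟩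
  refine ⟨(Finset.Icc 1 Δ).image f, ?_, ?_, ?_, ?_, ?_⟩
  · -- F ⊆ E
    intro p hp
    simp only [Finset.mem_image, Finset.mem_Icc] at hp
    obtain ⟨i, ⟨hi1, hi2⟩, rfl⟩ := hp
    simp only [EDeltaPairs, Finset.mem_image, Finset.mem_filter, Finset.mem_product,
      Finset.mem_Icc]
    exact ⟨(min i k, max i (k - m)), ⟨⟨⟨by omega, by omega⟩, ⟨by omega, by omega⟩⟩, by omega⟩,
      by simp [hfdef, hmdef]⟩
  · -- card
    rw [Finset.card_image_of_injOn, Nat.card_Icc]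
    · omega
    · intro i hi j hj hij
      simp only [Finset.mem_coe, Finset.mem_Icc] at hi hj
      have h1 : min i k = min j k := congrArg Prod.fst hij
      have h2 : m + max i (k - m) = m + max j (k - m) := congrArg Prod.snd hij
      omega
  · -- InjOn of min of π-values
    intro p hp q hq hpq
    simp only [Finset.coe_image, Set.mem_image, Finset.mem_coe, Finset.mem_Icc] at hp hq
    obtain ⟨i, ⟨hi1, hi2⟩, rfl⟩ := hp
    obtain ⟨j, ⟨hj1, hj2⟩, rfl⟩ := hq
    simp only at hpq
    have hi := key i hi1 hi2
    have hj := key j hj1 hj2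
    have hij : i = j := by
      rcases hi with ⟨hi, hik⟩ | ⟨hi, hik⟩ <;> rcases hj with ⟨hj, hjk⟩ | ⟨hj, hjk⟩ <;>
        rw [hi, hj] at hpq <;>
        have := π.injective hpq <;>
        simp only [hfdef] at this hik hjk <;>
        omega
    rw [hij]
  · -- C4
    rintro ⟨p1, p2⟩ hp
    simp only [Finset.mem_sdiff] at hp
    obtain ⟨hpE, hpF⟩ := hp
    simp only [EDeltaPairs, Finset.mem_image, Finset.mem_filter, Finset.mem_product,
      Finset.mem_Icc] at hpE
    obtain ⟨⟨a, b⟩, ⟨⟨⟨ha1, ha2⟩, hb1, hb2⟩, hab⟩, heq⟩ := hpE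
    simp only [Prod.mk.injEq] at heq
    obtain ⟨rfl, rfl⟩ := heq
    constructor
    · intro hc
      apply hpF
      simp only [Finset.mem_image, Finset.mem_Icc]
      refine ⟨b, ⟨hb1, hb2⟩, ?_⟩
      simp only [hfdef, Prod.mk.injEq]
      constructor <;> omega
    · intro hc
      apply hpF
      simp only [Finset.mem_image, Finset.mem_Icc]
      refine ⟨a, ⟨ha1, ha2⟩, ?_⟩
      simp only [hfdef, Prod.mk.injEq]
      constructor <;> omega
  · -- C5
    intro i hi1 hi2 h3 h4 hmem
    simp only [Finset.mem_sdiff] at hmem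
    apply hmem.2
    simp only [Finset.mem_image, Finset.mem_Icc]
    refine ⟨i, ⟨hi1, hi2⟩, ?_⟩
    simp only [hfdef, Prod.mk.injEq]
    constructor <;> omega
end
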